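/- Let m ≥ 1 and β > 1 the real root of x³ - m x² - m x - m. Set r = (r_0, r_1) = (m/β, -m/β - m/β²). Let z = (z_0, z_1) ∈ ℤ² with -m-1 ≤ z_0 ≤ m, |z_1| ≤ m+1, and |z_0 - z_1| ≤ m+1, and let α = β/(β+1). Then ⌊r_0 z_0 + r_1 z_1 + α⌋ = z_0 - z_1 if z_0 ≥ 0, or if z_0 = -1 and z_1 ≤ -1; and ⌊r_0 z_0 + r_1 z_1 + α⌋ = z_0 - z_1 + 1 if z_0 ≤ -2, or if z_0 = -1 and z_1 ≥ 0. -/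

import Mathlib

theorem stmt8 (m : ℤ) (hm : 1 ≤ m) (β : ℝ) (hβ : 1 < β)
    (hroot : β ^ 3 = m * β ^ 2 + m * β + m)
    (z0 z1 : ℤ) (h0 : -m - 1 ≤ z0) (h0' : z0 ≤ m) (h1 : |z1| ≤ m + 1)
    (h01 : |z0 - z1| ≤ m + 1) :
    ((0 ≤ z0 ∨ (z0 = -1 ∧ z1 ≤ -1)) →
      ⌊(m / β) * z0 + (-(m / β) - m / β ^ 2) * z1 + β / (β + 1)⌋ = z0 - z1) ∧
    ((z0 ≤ -2 ∨ (z0 = -1 ∧ 0 ≤ z1)) →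
      ⌊(m / β) * z0 + (-(m / β) - m / β ^ 2) * z1 + β / (β + 1)⌋ = z0 - z1 + 1) := by
  have hm1 : (1:ℝ) ≤ (m:ℝ) := by exact_mod_cast hm
  have hm0 : (0:ℝ) < (m:ℝ) := by linarith
  have hβ0 : (0:ℝ) < β := by linarith
  have hβ1 : (0:ℝ) < β + 1 := by linarith
  have hβ2 : (0:ℝ) < β^2 := by positivity
  have hβ3 : (0:ℝ) < β^3 := by positivity
  have hmβ : (m:ℝ) < β := by nlinarith [hroot, hm0, hβ0, hβ2]
  have hkey : (m:ℝ)*β + (m:ℝ) < β^2 := by nlinarith [hroot, hm0, hβ0]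
  have hroot4 : β^4 = (m:ℝ)*β^3 + m*β^2 + m*β := by linear_combination β * hroot
  have hrootm : (m:ℝ)*β^3 = m*(m*β^2) + m*(m*β) + m*m := by linear_combination (m:ℝ) * hroot
  have hkeym : (m:ℝ)*((m:ℝ)*β + m) < m*β^2 := mul_lt_mul_of_pos_left hkey hm0
  have hm2 : (m:ℝ) ≤ m*m := by nlinarith
  set a := (m:ℝ)/β^2 with ha_def
  set b := (m:ℝ)/β^3 with hb_def
  set α := β/(β+1) with hα_def
  have ha : 0 < a := by rw [ha_def]; exact div_pos hm0 hβ2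
  have hb : 0 < b := by rw [hb_def]; exact div_pos hm0 hβ3
  have hα0 : 0 < α := by rw [hα_def]; positivity
  have hα1 : α < 1 := by rw [hα_def, div_lt_one hβ1]; linarith
  have hden : (0:ℝ) < β^3*(β+1) := by positivity
  -- numeric lemmas
  have N1 : ((m:ℝ)+1)*b + α < 1 := by
    have e1 : ((m:ℝ)+1)*b + α = (((m:ℝ)+1)*m*(β+1) + β*β^3)/(β^3*(β+1)) := by
      rw [hb_def, hα_def]; field_simp; try ring
    rw [e1, div_lt_one hden]
    linarith [hroot, hkeym]
  have N2 : (m:ℝ)*a + ((m:ℝ)+1)*b ≤ α := by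
    have e2 : α - ((m:ℝ)*a + ((m:ℝ)+1)*b)
        = (β*β^3 - (m:ℝ)*m*β*(β+1) - ((m:ℝ)+1)*m*(β+1))/(β^3*(β+1)) := by
      rw [ha_def, hb_def, hα_def]; field_simp; try ring
    have hnum : (0:ℝ) ≤ β*β^3 - (m:ℝ)*m*β*(β+1) - ((m:ℝ)+1)*m*(β+1) := by
      linarith [hroot4, hrootm, hkeym, hm2]
    have := div_nonneg hnum hden.le
    linarith [e2 ▸ this]
  have N3 : a + α < 1 := by
    have e3 : a + α = ((m:ℝ)*(β+1) + β*β^2)/(β^2*(β+1)) := by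
      rw [ha_def, hα_def]; field_simp; try ring
    rw [e3, div_lt_one (by positivity)]
    linarith [hkey]
  have N4 : ((m:ℝ)+1)*b ≤ α := by linarith [N2, mul_pos hm0 ha]
  have N5 : 2*a + (1-(m:ℝ))*b + α ≥ 1 := by
    have e5 : 2*a + (1-(m:ℝ))*b + α - 1
        = (2*m*β*(β+1) + (1-(m:ℝ))*m*(β+1) + β*β^3 - β^3*(β+1))/(β^3*(β+1)) := by
      rw [ha_def, hb_def, hα_def]; field_simp; try ring
    have hnum : (0:ℝ) ≤ 2*m*β*(β+1) + (1-(m:ℝ))*m*(β+1) + β*β^3 - β^3*(β+1) := by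
      linarith [hroot, hkeym, mul_pos hm0 hβ0]
    have := div_nonneg hnum hden.le
    linarith [e5 ▸ this]
  have N6 : ((m:ℝ)+1)*a + ((m:ℝ)+1)*b + α < 2 := by
    have e6 : ((m:ℝ)+1)*a + ((m:ℝ)+1)*b + α
        = (((m:ℝ)+1)*m*β*(β+1) + ((m:ℝ)+1)*m*(β+1) + β*β^3)/(β^3*(β+1)) := by
      rw [ha_def, hb_def, hα_def]; field_simp; try ring
    rw [e6, div_lt_iff₀ hden]
    have hA : (m:ℝ)*(β+1)^2 < β*(β+1)^2 := mul_lt_mul_of_pos_right hmβ (by positivity)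
    have hB : (m:ℝ)*((m:ℝ)*(β+1)^2) < (m:ℝ)*(β*(β+1)^2) := mul_lt_mul_of_pos_left hA hm0
    linarith [hroot, hroot4, hB, hm0]
  have N7 : a + b + α ≥ 1 := by
    have e7 : a + b + α - 1
        = ((m:ℝ)*β*(β+1) + m*(β+1) + β*β^3 - β^3*(β+1))/(β^3*(β+1)) := by
      rw [ha_def, hb_def, hα_def]; field_simp; try ring
    have hnum : (0:ℝ) ≤ (m:ℝ)*β*(β+1) + m*(β+1) + β*β^3 - β^3*(β+1) := by
      linarith [hroot, mul_pos hm0 hβ0]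
    have := div_nonneg hnum hden.le
    linarith [e7 ▸ this]
  have N8 : a + ((m:ℝ)+1)*b + α < 2 := by
    linarith [N2, hα1, mul_nonneg (sub_nonneg.mpr hm1) ha.le]
  -- cast bounds
  have c0le : (z0:ℝ) ≤ m := by exact_mod_cast h0'
  have c0ge : -(m:ℝ)-1 ≤ (z0:ℝ) := by exact_mod_cast h0
  obtain ⟨h1a, h1b⟩ := abs_le.mp h1
  obtain ⟨h01a, h01b⟩ := abs_le.mp h01
  have c1ge : -((m:ℝ)+1) ≤ (z1:ℝ) := by exact_mod_cast h1a
  have c1le : (z1:ℝ) ≤ (m:ℝ)+1 := by exact_mod_cast h1b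
  have d1 : -((m:ℝ)+1) ≤ (z0:ℝ) - z1 := by exact_mod_cast h01a
  have d2 : (z0:ℝ) - z1 ≤ (m:ℝ)+1 := by exact_mod_cast h01b
  -- identity
  have hid1 : (m:ℝ)/β = 1 - a - b := by
    rw [ha_def, hb_def]; field_simp; linear_combination (-1 : ℝ) * hroot
  set D := -(z0:ℝ)*a + ((z1:ℝ)-(z0:ℝ))*b + α with hD
  have hexpr : (m:ℝ)/β * (z0:ℝ) + (-((m:ℝ)/β) - a) * (z1:ℝ) + α = ((z0:ℝ) - (z1:ℝ)) + D := by
    rw [hid1, hD]; ring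
  constructor
  · rintro (hc | ⟨hc, hc'⟩)
    · have hcr : (0:ℝ) ≤ (z0:ℝ) := by exact_mod_cast hc
      have hDl : 0 ≤ D := by
        linarith [N2, mul_nonneg (by linarith : (0:ℝ) ≤ (m:ℝ) - z0) ha.le,
          mul_nonneg (by linarith : (0:ℝ) ≤ (z1:ℝ) - z0 + ((m:ℝ)+1)) hb.le]
      have hDu : D < 1 := by
        linarith [N1, mul_nonneg hcr ha.le,
          mul_nonneg (by linarith : (0:ℝ) ≤ (m:ℝ)+1 - ((z1:ℝ) - z0)) hb.le]
      rw [hexpr, Int.floor_eq_iff]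
      constructor
      · push_cast; linarith
      · push_cast; linarith
    · have hc0r : (z0:ℝ) = -1 := by rw [hc]; norm_num
      have hc1r : (z1:ℝ) ≤ -1 := by exact_mod_cast hc'
      have hDB : D = a + ((z1:ℝ)+1)*b + α := by rw [hD, hc0r]; ring
      have hDl : 0 ≤ D := by
        rw [hDB]
        linarith [N4, ha,
          mul_nonneg (by linarith [d2, hc0r] : (0:ℝ) ≤ (z1:ℝ)+1+((m:ℝ)+1)) hb.le]
      have hDu : D < 1 := by
        rw [hDB]
        linarith [N3, mul_nonneg (by linarith : (0:ℝ) ≤ -(z1:ℝ)-1) hb.le]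
      rw [hexpr, Int.floor_eq_iff]
      constructor
      · push_cast; linarith
      · push_cast; linarith
  · rintro (hc | ⟨hc, hc'⟩)
    · have hcr : (z0:ℝ) ≤ -2 := by exact_mod_cast hc
      have hDl : 1 ≤ D := by
        linarith [N5, mul_nonneg (by linarith : (0:ℝ) ≤ -(z0:ℝ)-2) (by linarith : (0:ℝ) ≤ a + b),
          mul_nonneg (by linarith : (0:ℝ) ≤ (z1:ℝ)+((m:ℝ)+1)) hb.le]
      have hDu : D < 2 := by
        linarith [N6, mul_nonneg (by linarith : (0:ℝ) ≤ (m:ℝ)+1+(z0:ℝ)) ha.le,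
          mul_nonneg (by linarith : (0:ℝ) ≤ (m:ℝ)+1-((z1:ℝ)-z0)) hb.le]
      rw [hexpr, Int.floor_eq_iff]
      constructor
      · push_cast; linarith
      · push_cast; linarith
    · have hc0r : (z0:ℝ) = -1 := by rw [hc]; norm_num
      have hc1r : (0:ℝ) ≤ (z1:ℝ) := by exact_mod_cast hc'
      have hz1m : (z1:ℝ) ≤ m := by linarith [d1, hc0r]
      have hDB : D = a + ((z1:ℝ)+1)*b + α := by rw [hD, hc0r]; ring
      have hDl : 1 ≤ D := by
        rw [hDB]
        linarith [N7, mul_nonneg hc1r hb.le]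
      have hDu : D < 2 := by
        rw [hDB]
        linarith [N8, mul_nonneg (by linarith : (0:ℝ) ≤ (m:ℝ) - z1) hb.le]
      rw [hexpr, Int.floor_eq_iff]
      constructor
      · push_cast; linarith
      · push_cast; linarith
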